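/- Let h and k be positive integers with h ≤ k, and let A be a set of k nonnegative integers with 0 ∈ A. Then |h^∧_± A| ≥ 2(hk − h²) + h(h−1)/2 + 1. -/

import Mathlib

open Finset

/-- The restricted `h`-fold signed sumset of a finite set `A` of integers:
all sums `∑ λᵢ aᵢ` with `λᵢ ∈ {-1,0,1}` and `∑ |λᵢ| = h`. -/
def signedSumset (h : ℕ) (A : Finset ℤ) : Set ℤ :=
  {s | ∃ f : ℤ → ℤ, (∀ a, f a = -1 ∨ f a = 0 ∨ f a = 1) ∧ (∀ a ∉ A, f a = 0) ∧
    (∑ a ∈ A, |f a|) = (h : ℤ) ∧ s = ∑ a ∈ A, f a * a}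

lemma mem_signed (h : ℕ) (A T : Finset ℤ) (hT : T ⊆ A) (hc : T.card = h)
    (ε : ℤ → ℤ) (hε : ∀ a ∈ T, ε a = -1 ∨ ε a = 1) :
    (∑ a ∈ T, ε a * a) ∈ signedSumset h A := by
  refine ⟨fun a => if a ∈ T then ε a else 0, ?_, ?_, ?_, ?_⟩
  · intro a
    by_cases ha : a ∈ T
    · simp only [ha, if_true]
      rcases hε a ha with h1 | h1
      · exact Or.inl h1
      · exact Or.inr (Or.inr h1)
    · simp [ha]
  · intro a ha
    simp only [if_neg (fun h' => ha (hT h'))]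
  · rw [← Finset.sum_subset hT (by intro x _ hx; simp [hx])]
    have : ∀ a ∈ T, |if a ∈ T then ε a else 0| = 1 := by
      intro a ha
      rcases hε a ha with h1 | h1 <;> simp [ha, h1]
    rw [Finset.sum_congr rfl this, ← hc]
    simp
  · rw [← Finset.sum_subset hT (by intro x _ hx; simp [hx])]
    exact (Finset.sum_congr rfl (fun a ha => by simp [ha])).symm

lemma signed_finite (h : ℕ) (A : Finset ℤ) : (signedSumset h A).Finite := by
  apply Set.Finite.subset (Set.finite_Icc (-(∑ a ∈ A, |a|)) (∑ a ∈ A, |a|))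
  rintro s ⟨f, hf1, _, _, rfl⟩
  have hb : |∑ a ∈ A, f a * a| ≤ ∑ a ∈ A, |a| := by
    refine le_trans (Finset.abs_sum_le_sum_abs _ _) (Finset.sum_le_sum fun a _ => ?_)
    rw [abs_mul]
    have : |f a| ≤ 1 := by rcases hf1 a with h1 | h1 | h1 <;> simp [h1]
    nlinarith [abs_nonneg a, abs_nonneg (f a)]
  rw [abs_le] at hb
  exact ⟨hb.1, hb.2⟩

lemma chain_lemma (n : ℕ) : ∀ (B : Finset ℤ), B.card = n → (∀ x ∈ B, 0 < x) →
    ∃ L : List ℤ, L.Chain' (· < ·) ∧ L.length = n * (n + 1) / 2 + 1 ∧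
      (∀ x ∈ L, ∃ P ⊆ B, x = ∑ a ∈ P, a) ∧ L.head? = some 0 ∧
      L.getLast? = some (∑ a ∈ B, a) := by
  induction n with
  | zero =>
    intro B hB _
    refine ⟨[0], List.isChain_singleton _, by simp, ?_, by simp, ?_⟩
    · intro x hx
      simp at hx
      exact ⟨∅, by simp, by simp [hx]⟩
    · rw [Finset.card_eq_zero.mp hB]; simp
  | succ n ih =>
    intro B hB hpos
    have hne : B.Nonempty := Finset.card_pos.mp (by omega)
    set M := B.max' hne with hM
    have hMB : M ∈ B := B.max'_mem hne
    set B' := B.erase M with hB'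
    have hcard' : B'.card = n := by
      rw [hB', Finset.card_erase_of_mem hMB, hB]; omega
    have hpos' : ∀ x ∈ B', 0 < x := fun x hx => hpos x (Finset.mem_of_mem_erase hx)
    obtain ⟨L', hc', hl', hs', hh', hg'⟩ := ih B' hcard' hpos'
    have hL'ne : L' ≠ [] := by
      intro hnil; rw [hnil] at hh'; simp at hh'
    have hlt : ∀ x ∈ B', x < M := by
      intro x hx
      have := B.le_max' x (Finset.mem_of_mem_erase hx)
      have := Finset.ne_of_mem_erase hx
      omega
    have hMpos : 0 < M := hpos M hMB
    have hsort : ∀ x ∈ B'.sort (· ≤ ·), x ∈ B' := fun x hx => (Finset.mem_sort _).mp hx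
    have hsum : ∑ a ∈ B, a = M + ∑ a ∈ B', a := (Finset.add_sum_erase B id hMB).symm
    refine ⟨(0 :: B'.sort (· ≤ ·)) ++ L'.map (M + ·), ?_, ?_, ?_, ?_, ?_⟩
    · unfold List.Chain'; rw [List.isChain_append]
      refine ⟨?_, ?_, ?_⟩
      · rw [List.isChain_cons]
        refine ⟨fun y hy => hpos' y (hsort y (List.mem_of_mem_head? hy)), ?_⟩
        exact (Finset.sortedLT_sort B').isChain
      · rw [List.isChain_map]
        exact List.IsChain.imp (fun a b hab => by omega) hc'
      · intro x hx y hy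
        rw [List.head?_map, hh'] at hy
        simp at hy
        have hxm : x ∈ (0 : ℤ) :: B'.sort (· ≤ ·) := List.mem_of_mem_getLast? hx
        rcases List.mem_cons.mp hxm with rfl | hxs
        · omega
        · have := hlt x (hsort x hxs); omega
    · simp only [List.length_append, List.length_cons, List.length_map, hl',
        Finset.length_sort, hcard']
      have h2 : (n + 1) * (n + 1 + 1) = n * (n + 1) + 2 * (n + 1) := by ring
      have h3 : (n * (n + 1) + 2 * (n + 1)) / 2 = n * (n + 1) / 2 + (n + 1) :=
        Nat.add_mul_div_left _ _ (by norm_num)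
      omega
    · intro x hx
      rcases List.mem_append.mp hx with hx1 | hx2
      · rcases List.mem_cons.mp hx1 with rfl | hxs
        · exact ⟨∅, by simp, by simp⟩
        · refine ⟨{x}, ?_, by simp⟩
          intro y hy
          simp at hy
          exact Finset.mem_of_mem_erase (hy ▸ hsort x hxs)
      · obtain ⟨y, hyL, rfl⟩ := List.mem_map.mp hx2
        obtain ⟨P, hP, rfl⟩ := hs' y hyL
        have hMP : M ∉ P := fun hm => (Finset.ne_of_mem_erase (hP hm)) rfl
        refine ⟨insert M P, ?_, ?_⟩
        · intro z hz
          rcases Finset.mem_insert.mp hz with rfl | hz'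
          · exact hMB
          · exact Finset.mem_of_mem_erase (hP hz')
        · rw [Finset.sum_insert hMP]
    · simp
    · rw [List.getLast?_append, List.getLast?_map, hg', hsum]
      rfl

theorem stmt1 (h k : ℕ) (hh : 0 < h) (hhk : h ≤ k) (A : Finset ℤ)
    (hcard : A.card = k) (hnonneg : ∀ a ∈ A, 0 ≤ a) (h0 : (0 : ℤ) ∈ A) :
    2 * (h * k - h ^ 2) + h * (h - 1) / 2 + 1 ≤ (signedSumset h A).ncard := by
  have hk : 0 < k := lt_of_lt_of_le hh hhk
  -- the increasing enumeration of A (clamped beyond k)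
  set b : ℕ → ℤ := fun i => A.orderEmbOfFin hcard ⟨min i (k-1), by omega⟩ with hbdef
  have bmem : ∀ i, b i ∈ A := fun i => A.orderEmbOfFin_mem hcard _
  have bstrict : ∀ i j, i < j → j < k → b i < b j := by
    intro i j hij hjk
    apply (A.orderEmbOfFin hcard).strictMono
    simp [Fin.lt_def]
    omega
  have bmono : ∀ i j, i ≤ j → b i ≤ b j := by
    intro i j hij
    apply (A.orderEmbOfFin hcard).monotone
    simp [Fin.le_def]
    omega
  have b0 : b 0 = 0 := by
    obtain ⟨j, hj⟩ : ∃ j : Fin k, A.orderEmbOfFin hcard j = 0 := by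
      have h1 := A.range_orderEmbOfFin hcard
      have h2 : (0:ℤ) ∈ Set.range (A.orderEmbOfFin hcard) := by rw [h1]; exact_mod_cast h0
      exact h2
    have h1 : b 0 ≤ 0 := by
      rw [← hj]
      apply (A.orderEmbOfFin hcard).monotone
      simp [Fin.le_def]
    have h2 : 0 ≤ b 0 := hnonneg _ (bmem 0)
    omega
  have bnonneg : ∀ i, 0 ≤ b i := fun i => hnonneg _ (bmem i)
  -- the positive chain
  set d := k - h with hd
  set e := h * d with he
  set o : ℕ → ℕ → ℕ := fun t j => min d (t - (h - 1 - j) * d) with ho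
  set s : ℕ → ℤ := fun t => ∑ j ∈ range h, b (j + o t j) with hs
  have hidx_lt : ∀ t j, j < h → j + o t j < k := by
    intro t j hj
    have : o t j ≤ d := min_le_left _ _
    omega
  have ho_mono_j : ∀ t j1 j2, j1 ≤ j2 → o t j1 ≤ o t j2 := by
    intro t j1 j2 hj
    apply min_le_min le_rfl
    apply Nat.sub_le_sub_left
    exact Nat.mul_le_mul_right d (by omega)
  have ho_mono_t : ∀ t j, o t j ≤ o (t+1) j := by
    intro t j
    apply min_le_min le_rfl
    apply Nat.sub_le_sub_right
    omega
  have hidx_mono : ∀ t j1 j2, j1 < j2 → j1 + o t j1 < j2 + o t j2 := by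
    intro t j1 j2 hj
    have := ho_mono_j t j1 j2 (le_of_lt hj)
    omega
  have hs_step : ∀ t, t < e → s t < s (t+1) := by
    intro t ht
    have hdpos : 0 < d := by
      rcases Nat.eq_zero_or_pos d with h1 | h1
      · rw [he, h1, Nat.mul_zero] at ht; omega
      · exact h1
    obtain ⟨q, hq⟩ : ∃ q, t / d = q := ⟨_, rfl⟩
    obtain ⟨r, hr⟩ : ∃ r, t % d = r := ⟨_, rfl⟩
    have hmod : r + d * q = t := by rw [← hq, ← hr]; exact Nat.mod_add_div t d
    have hrlt : r < d := hr ▸ Nat.mod_lt t hdpos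
    have htd : q < h := by
      rw [← hq]; exact (Nat.div_lt_iff_lt_mul hdpos).mpr (by omega)
    have hcomm : q * d = d * q := Nat.mul_comm q d
    set j' := h - 1 - q with hj'
    have hj'r : h - 1 - j' = q := by omega
    have hot : o t j' = r := by
      show min d (t - (h - 1 - j') * d) = r
      rw [hj'r]
      have : t - q * d = r := by omega
      rw [this]
      exact min_eq_right (by omega)
    have hot1 : o (t+1) j' = r + 1 := by
      show min d (t + 1 - (h - 1 - j') * d) = r + 1
      rw [hj'r]
      have : t + 1 - q * d = r + 1 := by omega
      rw [this]
      exact min_eq_right (by omega)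
    apply Finset.sum_lt_sum
    · intro j hj
      exact bmono _ _ (by have := ho_mono_t t j; omega)
    · refine ⟨j', Finset.mem_range.mpr (by omega), ?_⟩
      rw [hot, hot1]
      exact bstrict _ _ (by omega) (by omega)
  have hs_mono : ∀ t2, t2 ≤ e → ∀ t1 < t2, s t1 < s t2 := by
    intro t2
    induction t2 with
    | zero => omega
    | succ t ih =>
      intro ht2 t1 ht1
      rcases Nat.lt_succ_iff_lt_or_eq.mp ht1 with h1 | rfl
      · exact lt_trans (ih (by omega) t1 h1) (hs_step t (by omega))
      · exact hs_step t1 (by omega)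
  set S0 := ∑ j ∈ range h, b j with hS0def
  have hs0 : s 0 = S0 := by
    apply Finset.sum_congr rfl
    intro j hj
    congr 1
    have : o 0 j = 0 := by simp [ho]
    omega
  -- membership of the positive/negative chain values
  have hTt : ∀ t, ∃ T : Finset ℤ, T ⊆ A ∧ T.card = h ∧ ∑ a ∈ T, a = s t := by
    intro t
    have hinj : Set.InjOn (fun j => b (j + o t j)) ↑(range h) := by
      intro j1 h1 j2 h2 heq
      simp only [Finset.coe_range, Set.mem_Iio] at h1 h2
      by_contra hne
      rcases Nat.lt_or_ge j1 j2 with hlt | hge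
      · exact absurd heq (ne_of_lt (bstrict _ _ (hidx_mono t j1 j2 hlt) (hidx_lt t j2 h2)))
      · have hlt : j2 < j1 := by omega
        exact absurd heq.symm (ne_of_lt (bstrict _ _ (hidx_mono t j2 j1 hlt) (hidx_lt t j1 h1)))
    refine ⟨(range h).image (fun j => b (j + o t j)), ?_, ?_, ?_⟩
    · intro x hx
      obtain ⟨j, _, rfl⟩ := Finset.mem_image.mp hx
      exact bmem _
    · rw [Finset.card_image_of_injOn hinj, Finset.card_range]
    · rw [Finset.sum_image (fun x hx y hy hxy => hinj hx hy hxy)]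
  have hposmem : ∀ t, s t ∈ signedSumset h A := by
    intro t
    obtain ⟨T, hTA, hTc, hTs⟩ := hTt t
    have hm := mem_signed h A T hTA hTc (fun _ => 1) (fun a _ => Or.inr rfl)
    have heq : ∑ a ∈ T, (fun _ => (1:ℤ)) a * a = s t := by rw [← hTs]; simp
    rwa [heq] at hm
  have hnegmem : ∀ t, -(s t) ∈ signedSumset h A := by
    intro t
    obtain ⟨T, hTA, hTc, hTs⟩ := hTt t
    have hm := mem_signed h A T hTA hTc (fun _ => -1) (fun a _ => Or.inl rfl)
    have heq : ∑ a ∈ T, (fun _ => (-1:ℤ)) a * a = -(s t) := by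
      rw [← hTs]
      simp only [neg_mul, one_mul]
      exact Finset.sum_neg_distrib _
    rwa [heq] at hm
  -- the middle chain
  have hbinjh : Set.InjOn b ↑(range h) := by
    intro j1 h1 j2 h2 heq
    simp only [Finset.coe_range, Set.mem_Iio] at h1 h2
    by_contra hne
    rcases Nat.lt_or_ge j1 j2 with hlt | hge
    · exact absurd heq (ne_of_lt (bstrict _ _ hlt (by omega)))
    · exact absurd heq.symm (ne_of_lt (bstrict _ _ (by omega) (by omega)))
  set T0 := (range h).image b with hT0
  have hT0A : T0 ⊆ A := by
    intro x hx
    obtain ⟨j, _, rfl⟩ := Finset.mem_image.mp hx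
    exact bmem _
  have hT0card : T0.card = h := by
    rw [hT0, Finset.card_image_of_injOn hbinjh, Finset.card_range]
  have hT0sum : ∑ a ∈ T0, a = S0 := by
    rw [hT0, Finset.sum_image (fun x hx y hy hxy => hbinjh hx hy hxy)]
  have h0T0 : (0:ℤ) ∈ T0 :=
    Finset.mem_image.mpr ⟨0, Finset.mem_range.mpr hh, b0⟩
  set T1 := T0.erase 0 with hT1
  have hT1card : T1.card = h - 1 := by
    rw [hT1, Finset.card_erase_of_mem h0T0, hT0card]
  have hT1sum : ∑ a ∈ T1, a = S0 := by
    have := Finset.add_sum_erase T0 id h0T0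
    simp only [id] at this
    rw [hT1]
    omega
  have hT1pos : ∀ x ∈ T1, 0 < x := by
    intro x hx
    have h1 := hnonneg x (hT0A (Finset.mem_of_mem_erase hx))
    have h2 := Finset.ne_of_mem_erase hx
    omega
  obtain ⟨L, hLc, hLlen, hLs, hLh, hLg⟩ := chain_lemma (h-1) T1 hT1card hT1pos
  have hmidmem : ∀ u ∈ L, (2*u - S0) ∈ signedSumset h A := by
    intro u hu
    obtain ⟨P, hP, rfl⟩ := hLs u hu
    have hPT0 : P ⊆ T0 := subset_trans hP (Finset.erase_subset _ _)
    have hm := mem_signed h A T0 hT0A hT0card (fun a => if a ∈ P then 1 else -1)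
      (by intro a _; by_cases hp : a ∈ P
          · simp [hp]
          · simp [hp])
    have hval : ∑ a ∈ T0, (if a ∈ P then (1:ℤ) else -1) * a = 2*(∑ a ∈ P, a) - S0 := by
      have h1 : ∀ a ∈ T0, (if a ∈ P then (1:ℤ) else -1) * a
          = 2*(if a ∈ P then a else 0) - a := by
        intro a _
        by_cases hp : a ∈ P <;> simp [hp] <;> ring
      rw [Finset.sum_congr rfl h1, Finset.sum_sub_distrib, ← Finset.mul_sum,
        Finset.sum_ite_mem, Finset.inter_eq_right.mpr hPT0, hT0sum]
    rwa [hval] at hm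
  have hmidbounds : ∀ u ∈ L, 0 ≤ u ∧ u ≤ S0 := by
    intro u hu
    obtain ⟨P, hP, rfl⟩ := hLs u hu
    constructor
    · exact Finset.sum_nonneg (fun a ha => le_of_lt (hT1pos a (hP ha)))
    · rw [← hT1sum]
      exact Finset.sum_le_sum_of_subset_of_nonneg hP
        (fun a ha _ => le_of_lt (hT1pos a ha))
  -- the three finsets
  set Sneg := (range (e+1)).image (fun t => -(s t)) with hSneg
  set Spos := (range (e+1)).image s with hSpos
  set Smid := (L.map (fun u => 2*u - S0)).toFinset with hSmid
  set Smid' := Smid \ {-S0, S0} with hSmid'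
  have hsinjOn : Set.InjOn s ↑(range (e+1)) := by
    intro t1 h1 t2 h2 heq
    simp only [Finset.coe_range, Set.mem_Iio] at h1 h2
    by_contra hne
    rcases Nat.lt_or_ge t1 t2 with hlt | hge
    · exact absurd heq (ne_of_lt (hs_mono t2 (by omega) t1 hlt))
    · exact absurd heq.symm (ne_of_lt (hs_mono t1 (by omega) t2 (by omega)))
  have hSposcard : Spos.card = e + 1 := by
    rw [hSpos, Finset.card_image_of_injOn hsinjOn, Finset.card_range]
  have hSnegcard : Sneg.card = e + 1 := by
    rw [hSneg, Finset.card_image_of_injOn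
      (fun t1 h1 t2 h2 heq => hsinjOn h1 h2 (by omega)), Finset.card_range]
  have hLnodup : (L.map (fun u => 2*u - S0)).Nodup := by
    have hpair : L.Pairwise (· < ·) := List.isChain_iff_pairwise.mp hLc
    have h2 : (L.map (fun u => 2*u - S0)).Pairwise (· < ·) :=
      List.pairwise_map.mpr (hpair.imp (fun hab => by omega))
    exact h2.imp (fun hab => ne_of_lt hab)
  have hSmidcard : Smid.card = (h-1) * (h-1+1) / 2 + 1 := by
    rw [hSmid, List.toFinset_card_of_nodup hLnodup, List.length_map, hLlen]
  have hSmid'card : Smid.card ≤ Smid'.card + 2 := by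
    calc Smid.card ≤ (Smid \ {-S0, S0}).card + ({-S0, S0} : Finset ℤ).card :=
          Finset.card_le_card_sdiff_add_card
      _ ≤ Smid'.card + 2 := by
          rw [← hSmid']
          have : ({-S0, S0} : Finset ℤ).card ≤ 2 := Finset.card_insert_le _ _
          omega
  -- bounds
  have hposlb : ∀ x ∈ Spos, S0 ≤ x := by
    intro x hx
    obtain ⟨t, ht, rfl⟩ := Finset.mem_image.mp hx
    rw [Finset.mem_range] at ht
    rcases Nat.eq_zero_or_pos t with rfl | htp
    · rw [hs0]
    · rw [← hs0]
      exact le_of_lt (hs_mono t (by omega) 0 htp)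
  have hnegub : ∀ x ∈ Sneg, x ≤ -S0 := by
    intro x hx
    obtain ⟨t, ht, rfl⟩ := Finset.mem_image.mp hx
    rw [Finset.mem_range] at ht
    rcases Nat.eq_zero_or_pos t with rfl | htp
    · rw [hs0]
    · have := hs_mono t (by omega) 0 htp
      rw [hs0] at this
      omega
  have hmidb : ∀ x ∈ Smid', -S0 < x ∧ x < S0 := by
    intro x hx
    obtain ⟨hxm, hxn⟩ := Finset.mem_sdiff.mp hx
    obtain ⟨u, hu, rfl⟩ := List.mem_map.mp (List.mem_toFinset.mp hxm)
    obtain ⟨h1, h2⟩ := hmidbounds u hu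
    simp only [Finset.mem_insert, Finset.mem_singleton] at hxn
    push_neg at hxn
    omega
  -- union
  set Stot := Sneg ∪ Smid' ∪ Spos with hStot
  have hsub : ↑Stot ⊆ signedSumset h A := by
    intro x hx
    rw [Finset.mem_coe, hStot, Finset.mem_union, Finset.mem_union] at hx
    rcases hx with (hx | hx) | hx
    · obtain ⟨t, _, rfl⟩ := Finset.mem_image.mp hx
      exact hnegmem t
    · have hxm := (Finset.mem_sdiff.mp hx).1
      obtain ⟨u, hu, rfl⟩ := List.mem_map.mp (List.mem_toFinset.mp hxm)
      exact hmidmem u hu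
    · obtain ⟨t, _, rfl⟩ := Finset.mem_image.mp hx
      exact hposmem t
  have hcardle : Stot.card ≤ (signedSumset h A).ncard := by
    rw [← Set.ncard_coe_finset]
    exact Set.ncard_le_ncard hsub (signed_finite h A)
  -- counting
  rcases Nat.lt_or_ge h 2 with hsm | h2
  · -- h = 1
    have h1 : h = 1 := by omega
    have hS0z : S0 = 0 := by rw [hS0def, h1]; simp [b0]
    have hint : Sneg ∩ Spos ⊆ {0} := by
      intro x hx
      rw [Finset.mem_inter] at hx
      have ha := hnegub x hx.1
      have hb := hposlb x hx.2
      rw [hS0z] at ha hb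
      simp
      omega
    have hintc : (Sneg ∩ Spos).card ≤ 1 :=
      le_trans (Finset.card_le_card hint) (by simp)
    have hie := Finset.card_union_add_card_inter Sneg Spos
    have hsub2 : Sneg ∪ Spos ⊆ Stot := by
      intro x hx
      rw [hStot, Finset.mem_union, Finset.mem_union]
      rcases Finset.mem_union.mp hx with hx | hx
      · exact Or.inl (Or.inl hx)
      · exact Or.inr hx
    have hst : 2*e + 1 ≤ Stot.card := by
      have := Finset.card_le_card hsub2
      omega
    have he' : e = k - 1 := by rw [he, hd, h1]; omega
    have hnum : 2 * (h * k - h ^ 2) + h * (h - 1) / 2 + 1 = 2 * (k - 1) + 1 := by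
      rw [h1]
      norm_num
    rw [hnum]
    omega
  · -- h ≥ 2
    have hS0pos : 0 < S0 := by
      have hb1 : b 1 ≤ S0 := by
        rw [hS0def]
        exact Finset.single_le_sum (fun i _ => bnonneg i)
          (Finset.mem_range.mpr (by omega))
      have := bstrict 0 1 (by omega) (by omega)
      rw [b0] at this
      omega
    have hd1 : Disjoint Sneg Smid' := by
      rw [Finset.disjoint_left]
      intro x h1x h2x
      have ha := hnegub x h1x
      have hb := (hmidb x h2x).1
      omega
    have hd2 : Disjoint (Sneg ∪ Smid') Spos := by
      rw [Finset.disjoint_left]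
      intro x h1x h2x
      have hp := hposlb x h2x
      rcases Finset.mem_union.mp h1x with hx | hx
      · have := hnegub x hx; omega
      · have := (hmidb x hx).2; omega
    have hc1 : Stot.card = Sneg.card + Smid'.card + Spos.card := by
      rw [hStot, Finset.card_union_of_disjoint hd2, Finset.card_union_of_disjoint hd1]
    have hY1 : 1 ≤ (h-1) * (h-1+1) / 2 := by
      have h2le : 2 ≤ (h-1) * (h-1+1) := by
        have := Nat.mul_le_mul (show 1 ≤ h-1 by omega) (show 2 ≤ h-1+1 by omega)
        omega
      omega
    have hmc : h * (h-1) / 2 = (h-1) * (h-1+1) / 2 := by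
      rw [Nat.mul_comm]
      congr 2
      omega
    obtain ⟨m, rfl⟩ : ∃ m, k = h + m := ⟨k - h, by omega⟩
    have hdm : d = m := by omega
    have he' : e = h * m := by rw [he, hdm]
    have hmul1 : h * (h + m) = h*h + h*m := by ring
    have hpow : h^2 = h*h := sq h
    rw [hpow]
    omega
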